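/- arXiv:0707.0050 — 3 statements merged into one kernel-verified Lean document; each statement's English description precedes it below -/
import Mathlib

section
/- Let σ² > 0, let A be a diagonal N×N complex matrix with spectral norm at most h_max², and let B be a Hermitian positive semidefinite N×N matrix, q ∈ ℂ^N. Then tr(((B + σ²I)^{-1} − (B + qq^H + σ²I)^{-1})·A) ≤ h_max²/σ². -/
open scoped ComplexOrder
open Matrix

variable {N : ℕ}

lemma aux_trace_vmv (u v : Fin N → ℂ) (X : Matrix (Fin N) (Fin N) ℂ) :
    (vecMulVec u v * X).trace = v ⬝ᵥ (X *ᵥ u) := by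
  simp only [Matrix.trace, Matrix.diag, Matrix.mul_apply, vecMulVec_apply, dotProduct,
    Matrix.mulVec, Finset.mul_sum]
  rw [Finset.sum_comm]
  exact Finset.sum_congr rfl fun j _ => Finset.sum_congr rfl fun i _ => by ring

lemma aux_vmv_mulVec (u v x : Fin N → ℂ) :
    vecMulVec u v *ᵥ x = (v ⬝ᵥ x) • u := by
  ext i
  simp only [Matrix.mulVec, vecMulVec_apply, dotProduct, Pi.smul_apply, smul_eq_mul,
    Finset.sum_mul]
  exact Finset.sum_congr rfl fun j _ => by ring

lemma aux_psd_vmv (q : Fin N → ℂ) : (vecMulVec q (star q)).PosSemidef := by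
  rw [vecMulVec_eq (Fin 1)]
  have := posSemidef_self_mul_conjTranspose (replicateCol (Fin 1) q)
  rwa [conjTranspose_replicateCol] at this

lemma aux_smul_one_posDef {σ2 : ℝ} (hσ : 0 < σ2) :
    ((σ2 : ℂ) • 1 : Matrix (Fin N) (Fin N) ℂ).PosDef := by
  rw [smul_one_eq_diagonal]
  exact Matrix.PosDef.diagonal fun i => by exact_mod_cast hσ

lemma aux_herm_dot (H : Matrix (Fin N) (Fin N) ℂ) (hH : H.IsHermitian) (x y : Fin N → ℂ) :
    star x ⬝ᵥ (H *ᵥ y) = star (H *ᵥ x) ⬝ᵥ y := by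
  rw [star_mulVec, hH.eq, dotProduct_mulVec]

theorem stmt_10 (N : ℕ) (σ2 hmax : ℝ) (hσ : 0 < σ2)
    (A B : Matrix (Fin N) (Fin N) ℂ) (q : Fin N → ℂ)
    (hAdiag : A.IsDiag) (hAnorm : ∀ i, ‖A i i‖ ≤ hmax ^ 2)
    (hB : B.PosSemidef) :
    ((((B + (σ2 : ℂ) • 1)⁻¹ - (B + Matrix.vecMulVec q (star q) + (σ2 : ℂ) • 1)⁻¹) * A).trace).re
      ≤ hmax ^ 2 / σ2 := by
  have hV := aux_psd_vmv q
  set V := Matrix.vecMulVec q (star q) with hVdef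
  set M := B + (σ2:ℂ) • 1 with hMdef
  set M' := B + V + (σ2:ℂ) • 1 with hM'def
  have hM : M.PosDef := Matrix.PosDef.posSemidef_add hB (aux_smul_one_posDef hσ)
  have hM' : M'.PosDef := Matrix.PosDef.posSemidef_add (hB.add hV) (aux_smul_one_posDef hσ)
  have hdM : IsUnit M.det := (Matrix.isUnit_iff_isUnit_det M).mp hM.isUnit
  have hdM' : IsUnit M'.det := (Matrix.isUnit_iff_isUnit_det M').mp hM'.isUnit
  have hsub : M' - M = V := by rw [hM'def, hMdef]; abel
  have h1 : M⁻¹ * M = 1 := Matrix.nonsing_inv_mul M hdM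
  have h1' : M * M⁻¹ = 1 := Matrix.mul_nonsing_inv M hdM
  have h2 : M' * M'⁻¹ = 1 := Matrix.mul_nonsing_inv M' hdM'
  have h2' : M'⁻¹ * M' = 1 := Matrix.nonsing_inv_mul M' hdM'
  have hres : M⁻¹ - M'⁻¹ = M⁻¹ * V * M'⁻¹ := by
    rw [← hsub, Matrix.mul_sub, Matrix.sub_mul, Matrix.mul_assoc, h2, Matrix.mul_one,
      h1, Matrix.one_mul]
  -- the vector w and scalar α
  set w : Fin N → ℂ := M⁻¹ *ᵥ q with hwdef
  set α : ℂ := star q ⬝ᵥ w with hαdef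
  have hα0 : 0 ≤ α := hM.inv.posSemidef.dotProduct_mulVec_nonneg q
  obtain ⟨ha0, hia⟩ := Complex.nonneg_iff.mp hα0
  set a : ℝ := α.re with hadef
  have hαa : α = (a : ℂ) := Complex.ext rfl (by simp [← hia])
  -- trace identity
  have htr : (((M⁻¹ - M'⁻¹) * A).trace) = star q ⬝ᵥ (M'⁻¹ *ᵥ (A *ᵥ w)) := by
    rw [hres, show M⁻¹ * V * M'⁻¹ * A = M⁻¹ * (V * (M'⁻¹ * A)) by
      simp only [Matrix.mul_assoc], Matrix.trace_mul_comm,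
      show V * (M'⁻¹ * A) * M⁻¹ = V * (M'⁻¹ * A * M⁻¹) by simp only [Matrix.mul_assoc],
      aux_trace_vmv]
    congr 1
    rw [← Matrix.mulVec_mulVec, ← Matrix.mulVec_mulVec]
  -- Sherman-Morrison style step
  have hq : M *ᵥ w = q := by
    rw [hwdef, Matrix.mulVec_mulVec, h1', Matrix.one_mulVec]
  have hM'M : M' = M + V := by rw [hM'def, hMdef]; abel
  have hMw' : M' *ᵥ w = (1 + α) • q := by
    rw [hM'M, Matrix.add_mulVec, hq, hVdef, aux_vmv_mulVec, ← hαdef, add_smul, one_smul]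
  have h1α : (1 + α) ≠ 0 := by
    rw [hαa, show (1:ℂ) + (a:ℂ) = ((1+a : ℝ) : ℂ) by push_cast; ring]
    exact_mod_cast (by linarith : (1:ℝ) + a ≠ 0)
  have hT : M'⁻¹ *ᵥ q = (1 + α)⁻¹ • w := by
    have := congrArg (fun x => M'⁻¹ *ᵥ x) hMw'
    simp only [Matrix.mulVec_mulVec, h2', Matrix.one_mulVec, Matrix.mulVec_smul] at this
    rw [eq_comm, inv_smul_eq_iff₀ h1α, this]
  -- rewrite trace using hermitian-ness of M'⁻¹
  set β : ℂ := star w ⬝ᵥ (A *ᵥ w) with hβdef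
  have htr2 : (((M⁻¹ - M'⁻¹) * A).trace) = (((1+a)⁻¹ : ℝ) : ℂ) * β := by
    rw [htr, aux_herm_dot _ hM'.inv.isHermitian, hT, star_smul, smul_dotProduct, hβdef]
    congr 1
    rw [hαa]
    simp [← Complex.ofReal_one, ← Complex.ofReal_add, ← Complex.ofReal_inv]
  -- componentwise diagonal action
  have hAv : ∀ i, (A *ᵥ w) i = A i i * w i := fun i => by
    simp only [Matrix.mulVec, dotProduct]
    exact Finset.sum_eq_single i (fun j _ hj => by rw [hAdiag (Ne.symm hj), zero_mul])
      (fun h => absurd (Finset.mem_univ i) h)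
  set s : ℝ := ∑ i, Complex.normSq (w i) with hsdef
  have hs0 : 0 ≤ s := Finset.sum_nonneg fun i _ => Complex.normSq_nonneg _
  have hβre : β.re ≤ hmax ^ 2 * s := by
    have hβeq : β = ∑ i, (starRingEnd ℂ) (w i) * (A i i * w i) := by
      rw [hβdef, dotProduct]
      exact Finset.sum_congr rfl fun i _ => by rw [hAv i]; rfl
    rw [hβeq, Complex.re_sum, hsdef, Finset.mul_sum]
    refine Finset.sum_le_sum fun i _ => ?_
    have h1 := Complex.re_le_norm ((starRingEnd ℂ) (w i) * (A i i * w i))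
    have h2 : ‖(starRingEnd ℂ) (w i) * (A i i * w i)‖
        = ‖A i i‖ * Complex.normSq (w i) := by
      rw [norm_mul, norm_mul, Complex.norm_conj, ← Complex.sq_norm]
      ring
    refine h1.trans (h2.le.trans ?_)
    exact mul_le_mul_of_nonneg_right (hAnorm i) (Complex.normSq_nonneg _)
  -- σ2 * s ≤ a
  have hww : (star w ⬝ᵥ w).re = s := by
    rw [dotProduct, Complex.re_sum, hsdef]
    refine Finset.sum_congr rfl fun i _ => ?_
    have : (star w) i * w i = ((Complex.normSq (w i) : ℝ) : ℂ) := by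
      simp only [Pi.star_apply, Complex.star_def]
      rw [mul_comm, Complex.mul_conj]
    rw [this, Complex.ofReal_re]
  have hγ : star w ⬝ᵥ q = star α := by
    rw [hαdef, Matrix.star_dotProduct]
  have hkey : a = (star w ⬝ᵥ (B *ᵥ w)).re + σ2 * s := by
    have hexp : star w ⬝ᵥ q = star w ⬝ᵥ (B *ᵥ w) + (σ2:ℂ) * (star w ⬝ᵥ w) := by
      conv_lhs => rw [← hq, hMdef, Matrix.add_mulVec, dotProduct_add]
      congr 1
      rw [Matrix.smul_mulVec, Matrix.one_mulVec, dotProduct_smul, smul_eq_mul]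
    have := congrArg Complex.re hexp
    rw [hγ, Complex.star_def, Complex.conj_re, ← hadef, Complex.add_re,
      Complex.re_ofReal_mul, hww] at this
    exact this
  have hBw : 0 ≤ (star w ⬝ᵥ (B *ᵥ w)).re := by
    have := hB.re_dotProduct_nonneg w
    simpa using this
  have hsa : σ2 * s ≤ a := by linarith
  -- final arithmetic
  rw [htr2, Complex.re_ofReal_mul]
  have h1a : (0:ℝ) < 1 + a := by linarith
  have step1 : (1+a)⁻¹ * β.re ≤ (1+a)⁻¹ * (hmax^2 * s) :=
    mul_le_mul_of_nonneg_left hβre (by positivity)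
  refine step1.trans ?_
  rw [inv_mul_le_iff₀ h1a, mul_div_assoc', le_div_iff₀ hσ]
  nlinarith [mul_le_mul_of_nonneg_left hsa (sq_nonneg hmax), sq_nonneg hmax]
end

section
/- Let ρ : [0,1] × [0,α] → [0,∞) be bounded and measurable, σ² > 0, and β : [0,α] → [0,∞) measurable satisfying β(x) = ∫₀¹ ρ(f,x) df / (σ² + ∫₀^α ρ(f,y)/(1+β(y)) dy) for a.e. x (where the inner integral over y appears in the denominator for each f). If u(f) = 1/(∫₀^α ρ(f,y)/(1+β(y)) dy + σ²), then ∫₀¹ u(f) df − 1/σ² = −∫₀^α β(x)/(σ²(1+β(x))) dx. -/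
open MeasureTheory

theorem stmt_14 (α σ2 : ℝ) (hα : 0 < α) (hσ : 0 < σ2)
    (ρ : ℝ → ℝ → ℝ) (hρmeas : Measurable (fun p : ℝ × ℝ => ρ p.1 p.2))
    (C : ℝ) (hρbdd : ∀ f x, 0 ≤ ρ f x ∧ ρ f x ≤ C)
    (β : ℝ → ℝ) (hβmeas : Measurable β) (hβnn : ∀ x, 0 ≤ β x)
    (hβeq : ∀ᵐ x ∂(volume.restrict (Set.Icc 0 α)),
      β x = ∫ f in (0:ℝ)..1,
        ρ f x / (σ2 + ∫ y in (0:ℝ)..α, ρ f y / (1 + β y)))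
    (u : ℝ → ℝ)
    (hu : ∀ f, u f = 1 / ((∫ y in (0:ℝ)..α, ρ f y / (1 + β y)) + σ2)) :
    (∫ f in (0:ℝ)..1, u f) - 1 / σ2
      = -∫ x in (0:ℝ)..α, β x / (σ2 * (1 + β x)) := by
  have hC : (0:ℝ) ≤ C := le_trans (hρbdd 0 0).1 (hρbdd 0 0).2
  have hβ1 : ∀ y, (0:ℝ) < 1 + β y := fun y => by linarith [hβnn y]
  set D : ℝ → ℝ := fun f => ∫ y in (0:ℝ)..α, ρ f y / (1 + β y) with hDdef
  set I1 : Set ℝ := Set.Ioc (0:ℝ) 1 with hI1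
  set I2 : Set ℝ := Set.Ioc (0:ℝ) α with hI2
  haveI : IsFiniteMeasure (volume.restrict I1) := by
    constructor
    rw [Measure.restrict_apply_univ, hI1, Real.volume_Ioc]
    exact ENNReal.ofReal_lt_top
  haveI : IsFiniteMeasure (volume.restrict I2) := by
    constructor
    rw [Measure.restrict_apply_univ, hI2, Real.volume_Ioc]
    exact ENNReal.ofReal_lt_top
  have hDset : ∀ f, D f = ∫ y in I2, ρ f y / (1 + β y) := fun f =>
    intervalIntegral.integral_of_le hα.le
  have hg : Measurable (fun p : ℝ × ℝ => ρ p.1 p.2 / (1 + β p.2)) :=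
    hρmeas.div (measurable_const.add (hβmeas.comp measurable_snd))
  have hDmeas : Measurable D := by
    have h := ((hg.stronglyMeasurable.integral_prod_right'
        (ν := volume.restrict I2))).measurable
    have hEq : D = fun f => ∫ y, ρ f y / (1 + β y) ∂(volume.restrict I2) :=
      funext fun f => hDset f
    rw [hEq]; exact h
  have hDnn : ∀ f, 0 ≤ D f := fun f =>
    intervalIntegral.integral_nonneg hα.le
      (fun y _ => div_nonneg (hρbdd f y).1 (hβ1 y).le)
  have hDσ : ∀ f, 0 < D f + σ2 := fun f => by linarith [hDnn f]
  have hu' : u = fun f => 1 / (D f + σ2) := funext hu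
  have humeas : Measurable u := by
    rw [hu']; exact measurable_const.div (hDmeas.add_const σ2)
  have hu2 : ∀ f, u f = 1 / (D f + σ2) := fun f => hu f
  have hu_nn : ∀ f, 0 ≤ u f := fun f => by
    rw [hu2 f]; exact one_div_nonneg.mpr (hDσ f).le
  have hu_le : ∀ f, u f ≤ 1 / σ2 := fun f => by
    rw [hu2 f]; exact one_div_le_one_div_of_le hσ (by linarith [hDnn f])
  -- integrability of u on I1
  have hu_int : Integrable u (volume.restrict I1) := by
    refine ⟨humeas.aestronglyMeasurable, ?_⟩
    exact HasFiniteIntegral.of_bounded (C := 1 / σ2)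
      (Filter.Eventually.of_forall fun f => by
        rw [Real.norm_eq_abs, abs_of_nonneg (hu_nn f)]; exact hu_le f)
  -- product integrability
  set F : ℝ × ℝ → ℝ := fun p => ρ p.1 p.2 / (1 + β p.2) * u p.1 with hFdef
  have hFmeas : Measurable F := hg.mul (humeas.comp measurable_fst)
  have hFint : Integrable F ((volume.restrict I1).prod (volume.restrict I2)) := by
    refine ⟨hFmeas.aestronglyMeasurable, ?_⟩
    refine HasFiniteIntegral.of_bounded (C := C * (1 / σ2))
      (Filter.Eventually.of_forall fun p => ?_)
    have h1 : ρ p.1 p.2 / (1 + β p.2) ≤ C :=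
      le_trans (div_le_self (hρbdd p.1 p.2).1 (by linarith [hβnn p.2]))
        (hρbdd p.1 p.2).2
    have h0 : 0 ≤ ρ p.1 p.2 / (1 + β p.2) :=
      div_nonneg (hρbdd p.1 p.2).1 (hβ1 p.2).le
    rw [Real.norm_eq_abs, abs_of_nonneg (mul_nonneg h0 (hu_nn p.1))]
    exact mul_le_mul h1 (hu_le p.1) (hu_nn p.1) hC
  -- rewrite LHS
  have hA : ∫ f in (0:ℝ)..1, u f = ∫ f in I1, u f :=
    intervalIntegral.integral_of_le zero_le_one
  have hconst : ∫ _ in I1, (1 / σ2 : ℝ) = 1 / σ2 := by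
    rw [setIntegral_const, hI1, measureReal_def, Real.volume_Ioc]
    norm_num
  have hsub : (∫ f in I1, u f) - 1 / σ2 = ∫ f in I1, (u f - 1 / σ2) := by
    rw [integral_sub hu_int (integrable_const _), hconst]
  have hpt : ∀ f, u f - 1 / σ2 = -(1 / σ2 * (D f * u f)) := fun f => by
    have h1 : D f + σ2 ≠ 0 := (hDσ f).ne'
    rw [hu2 f]
    field_simp
    ring
  have hDu : ∀ f, D f * u f = ∫ y in I2, F (f, y) := fun f => by
    rw [hDset f, hFdef]
    exact (integral_mul_const (u f) _).symm
  -- Fubini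
  have hswap : ∫ f in I1, ∫ y in I2, F (f, y) = ∫ y in I2, ∫ f in I1, F (f, y) :=
    integral_integral_swap (f := fun f y => F (f, y)) hFint
  -- inner integral equals β y * (1+β y)⁻¹ a.e.
  have hβeq' : ∀ᵐ y ∂(volume.restrict I2),
      β y = ∫ f in (0:ℝ)..1, ρ f y / (σ2 + D f) := by
    rw [hI2]
    exact ae_restrict_of_ae_restrict_of_subset Set.Ioc_subset_Icc_self hβeq
  have hinner : ∀ᵐ y ∂(volume.restrict I2),
      (∫ f in I1, F (f, y)) = β y * (1 + β y)⁻¹ := by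
    filter_upwards [hβeq'] with y hy
    have h1 : ∀ f, F (f, y) = ρ f y / (σ2 + D f) * (1 + β y)⁻¹ := fun f => by
      show ρ f y / (1 + β y) * u f = ρ f y / (σ2 + D f) * (1 + β y)⁻¹
      have h2 : (1 : ℝ) + β y ≠ 0 := (hβ1 y).ne'
      have h3 : D f + σ2 ≠ 0 := (hDσ f).ne'
      have h4 : σ2 + D f ≠ 0 := by rw [add_comm]; exact h3
      rw [hu2 f]
      field_simp
      ring
    calc ∫ f in I1, F (f, y)
        = ∫ f in I1, ρ f y / (σ2 + D f) * (1 + β y)⁻¹ := by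
          exact integral_congr_ae (Filter.Eventually.of_forall fun f => h1 f)
      _ = (∫ f in I1, ρ f y / (σ2 + D f)) * (1 + β y)⁻¹ :=
          integral_mul_const _ _
      _ = β y * (1 + β y)⁻¹ := by
          rw [← intervalIntegral.integral_of_le zero_le_one, ← hy]
  have hRHS : ∫ x in (0:ℝ)..α, β x / (σ2 * (1 + β x))
      = 1 / σ2 * ∫ y in I2, β y * (1 + β y)⁻¹ := by
    rw [intervalIntegral.integral_of_le hα.le, ← integral_const_mul]
    refine integral_congr_ae (Filter.Eventually.of_forall fun y => ?_)
    have h2 : (1 : ℝ) + β y ≠ 0 := (hβ1 y).ne'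
    field_simp
  calc (∫ f in (0:ℝ)..1, u f) - 1 / σ2
      = ∫ f in I1, (u f - 1 / σ2) := by rw [hA, hsub]
    _ = ∫ f in I1, -(1 / σ2 * (D f * u f)) :=
        integral_congr_ae (Filter.Eventually.of_forall fun f => hpt f)
    _ = -(1 / σ2 * ∫ f in I1, D f * u f) := by
        rw [integral_neg, integral_const_mul]
    _ = -(1 / σ2 * ∫ f in I1, ∫ y in I2, F (f, y)) := by
        congr 1
        congr 1
        exact integral_congr_ae (Filter.Eventually.of_forall fun f => hDu f)
    _ = -(1 / σ2 * ∫ y in I2, ∫ f in I1, F (f, y)) := by rw [hswap]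
    _ = -(1 / σ2 * ∫ y in I2, β y * (1 + β y)⁻¹) := by
        rw [integral_congr_ae hinner]
    _ = -∫ x in (0:ℝ)..α, β x / (σ2 * (1 + β x)) := by rw [hRHS]
end

section
/- Let γ : [0,∞) → [0,∞) be C¹ with γ(0) = 0 and strictly quasiconcave in the sense that there exists β₀ > 0 with γ strictly increasing and strictly convex on [0, β₀] and γ'(β)β − γ(β) strictly decreasing for β > β₀ eventually becoming negative. Specifically, take γ(β) = (1 − e^{−β})^M for an integer M ≥ 2. Then the equation β·γ'(β) = γ(β) has a unique solution β* > 0. -/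
lemma aux_hasDerivAt (M : ℕ) (b : ℝ) :
    HasDerivAt (fun β : ℝ => (1 - Real.exp (-β)) ^ M)
      ((M : ℝ) * (1 - Real.exp (-b)) ^ (M - 1) * Real.exp (-b)) b := by
  have h1 : HasDerivAt (fun β : ℝ => Real.exp (-β)) (Real.exp (-b) * (-1)) b :=
    (hasDerivAt_neg b).exp
  have h2 : HasDerivAt (fun β : ℝ => 1 - Real.exp (-β)) (Real.exp (-b)) b := by
    have := (hasDerivAt_const b (1 : ℝ)).sub h1
    simpa [Pi.sub_def] using this
  simpa [Pi.pow_def, mul_comm, mul_assoc, mul_left_comm] using h2.pow M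

lemma aux_equiv (M : ℕ) (hM : 2 ≤ M) (b : ℝ) (hb : 0 < b) :
    (b * deriv (fun β : ℝ => (1 - Real.exp (-β)) ^ M) b = (1 - Real.exp (-b)) ^ M)
      ↔ Real.exp b = M * b + 1 := by
  rw [(aux_hasDerivAt M b).deriv]
  have hA : 0 < 1 - Real.exp (-b) := by
    have : Real.exp (-b) < 1 := by
      rw [Real.exp_lt_one_iff]; linarith
    linarith
  have hM1 : M = (M - 1) + 1 := by omega
  have hpow : (1 - Real.exp (-b)) ^ M
      = (1 - Real.exp (-b)) ^ (M - 1) * (1 - Real.exp (-b)) := by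
    conv_lhs => rw [hM1]
    rw [pow_succ]
  constructor
  · intro h
    rw [hpow] at h
    have h2 : b * ((M : ℝ) * Real.exp (-b)) = 1 - Real.exp (-b) := by
      have hne : (1 - Real.exp (-b)) ^ (M - 1) ≠ 0 := pow_ne_zero _ (ne_of_gt hA)
      have h' : (b * ((M:ℝ) * Real.exp (-b))) * (1 - Real.exp (-b)) ^ (M-1)
          = (1 - Real.exp (-b)) * (1 - Real.exp (-b)) ^ (M-1) := by
        linear_combination h
      exact mul_right_cancel₀ hne h'
    have he : Real.exp (-b) = (Real.exp b)⁻¹ := by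
      rw [Real.exp_neg]
    rw [he] at h2
    have hep : (0:ℝ) < Real.exp b := Real.exp_pos b
    field_simp at h2
    nlinarith [h2]
  · intro h
    have he : Real.exp (-b) * Real.exp b = 1 := by
      rw [← Real.exp_add]; simp
    have h2 : b * ((M : ℝ) * Real.exp (-b)) = 1 - Real.exp (-b) := by
      have hep : Real.exp b ≠ 0 := (Real.exp_pos b).ne'
      have : Real.exp (-b) = (Real.exp b)⁻¹ := Real.exp_neg b
      rw [this]
      field_simp
      nlinarith [h]
    calc b * ((M:ℝ) * (1 - Real.exp (-b)) ^ (M - 1) * Real.exp (-b))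
        = (b * ((M:ℝ) * Real.exp (-b))) * (1 - Real.exp (-b)) ^ (M - 1) := by ring
      _ = (1 - Real.exp (-b)) * (1 - Real.exp (-b)) ^ (M - 1) := by rw [h2]
      _ = (1 - Real.exp (-b)) ^ M := by rw [hpow]; ring

theorem stmt_15 (M : ℕ) (hM : 2 ≤ M) :
    ∃! b : ℝ, 0 < b ∧
      b * deriv (fun β : ℝ => (1 - Real.exp (-β)) ^ M) b
        = (1 - Real.exp (-b)) ^ M := by
  have hM2 : (2:ℝ) ≤ (M:ℝ) := by exact_mod_cast hM
  -- existence of a root of exp b = M b + 1 on [1, 4M]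
  have hcont : ContinuousOn (fun x : ℝ => Real.exp x - ((M:ℝ) * x + 1)) (Set.Icc 1 (4*M)) := by
    fun_prop
  have h1 : Real.exp 1 - ((M:ℝ) * 1 + 1) < 0 := by
    have := Real.exp_one_lt_d9
    nlinarith
  have h4M : 0 < Real.exp (4*(M:ℝ)) - ((M:ℝ) * (4*M) + 1) := by
    have key : (2*(M:ℝ) + 1) ≤ Real.exp (2*M) := Real.add_one_le_exp (2*(M:ℝ))
    have : Real.exp (4*(M:ℝ)) = Real.exp (2*M) * Real.exp (2*M) := by
      rw [← Real.exp_add]; ring_nf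
    nlinarith [Real.exp_pos (2*(M:ℝ))]
  have hle : (1:ℝ) ≤ 4*M := by nlinarith
  have := intermediate_value_Icc hle hcont
  have hmem : (0:ℝ) ∈ Set.Icc (Real.exp 1 - ((M:ℝ)*1+1)) (Real.exp (4*M) - ((M:ℝ)*(4*M)+1)) := by
    constructor <;> linarith
  obtain ⟨c, hc, hc0⟩ := this hmem
  have hcpos : 0 < c := lt_of_lt_of_le one_pos hc.1
  have hceq : Real.exp c = (M:ℝ) * c + 1 := by
    have : Real.exp c - ((M:ℝ) * c + 1) = 0 := hc0
    linarith
  -- uniqueness helper: no two distinct positive roots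
  have huniq : ∀ x y : ℝ, 0 < x → Real.exp x = (M:ℝ)*x+1 → 0 < y →
      Real.exp y = (M:ℝ)*y+1 → x < y → False := by
    intro x y hx hex hy hey hxy
    have hyne : y ≠ 0 := hy.ne'
    have h0y : (0:ℝ) ≠ y := hy.ne
    have ha : 0 < 1 - x/y := by
      have : x/y < 1 := (div_lt_one hy).2 hxy
      linarith
    have hb : 0 < x/y := div_pos hx hy
    have hsum : (1 - x/y) + x/y = 1 := by ring
    have := strictConvexOn_exp.2 (Set.mem_univ (0:ℝ)) (Set.mem_univ y) h0y ha hb hsum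
    simp only [smul_eq_mul, mul_zero, zero_add, Real.exp_zero] at this
    rw [show x/y * y = x by field_simp] at this
    rw [hex, hey] at this
    have hxyy : x/y * y = x := by field_simp
    nlinarith [this]
  refine ⟨c, ⟨hcpos, (aux_equiv M hM c hcpos).2 hceq⟩, ?_⟩
  rintro y ⟨hy, hyeq⟩
  have hyroot := (aux_equiv M hM y hy).1 hyeq
  rcases lt_trichotomy y c with h | h | h
  · exact absurd (huniq y c hy hyroot hcpos hceq h) id
  · exact h
  · exact absurd (huniq c y hcpos hceq hy hyroot h) id
end
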